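/- Let H be a real Hilbert space, u : [0,∞) → H continuously differentiable with derivative u', E : H → ℝ, e₀ ∈ ℝ, K > 0, θ ∈ (0, 1/2), and t₀ ≥ 0. Suppose that for every t ≥ 0 the function s ↦ E(u(s)) is differentiable at t with derivative −‖u'(t)‖², that for all t ≥ t₀ one has E(u(t)) ≥ e₀ and ‖u'(t)‖ ≥ K·(E(u(t)) − e₀)^{1−θ}, and that u(t) → u^∞ in H as t → ∞. Then there exists a constant κ > 0 such that ‖u(t) − u^∞‖ ≤ κ·(1 + t)^{−θ/(1−2θ)} for all t ≥ t₀; i.e. the solution converges to the equilibrium at a polynomial rate in the H-norm. -/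

import Mathlib

open Filter Set

/-- Polynomial decay rate to equilibrium in the case `0 < θ < 1/2`. -/
theorem polynomial_decay_to_equilibrium
    {H : Type*} [NormedAddCommGroup H] [InnerProductSpace ℝ H]
    (u u' : ℝ → H) (E : H → ℝ) (e₀ K θ t₀ : ℝ) (uinf : H)
    (hu : ∀ s ≥ (0 : ℝ), HasDerivAt u (u' s) s) (hu' : ContinuousOn u' (Set.Ici 0))
    (hK : 0 < K) (hθ : θ ∈ Set.Ioo (0 : ℝ) (1 / 2)) (ht₀ : 0 ≤ t₀)
    (hderiv : ∀ t ≥ (0 : ℝ), HasDerivAt (fun s => E (u s)) (-‖u' t‖ ^ 2) t)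
    (hE : ∀ t ≥ t₀, E (u t) ≥ e₀)
    (hLS : ∀ t ≥ t₀, ‖u' t‖ ≥ K * (E (u t) - e₀) ^ (1 - θ))
    (hlim : Tendsto u atTop (nhds uinf)) :
    ∃ κ > (0 : ℝ), ∀ t ≥ t₀,
      ‖u t - uinf‖ ≤ κ * (1 + t) ^ (-(θ / (1 - 2 * θ))) := by
  obtain ⟨hθ0, hθ2⟩ := hθ
  have h12 : 0 < 1 - 2 * θ := by linarith
  have hθK : 0 < θ * K := mul_pos hθ0 hK
  set f : ℝ → ℝ := fun t => E (u t) - e₀ with hfdef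
  have hf' : ∀ t ≥ (0 : ℝ), HasDerivAt f (-‖u' t‖ ^ 2) t := fun t ht =>
    (hderiv t ht).sub_const e₀
  have hf0 : ∀ t ≥ t₀, 0 ≤ f t := fun t ht => sub_nonneg.2 (hE t ht)
  have hLSf : ∀ t ≥ t₀, K * f t ^ (1 - θ) ≤ ‖u' t‖ := fun t ht => hLS t ht
  have hmem : ∀ t ≥ t₀, (0 : ℝ) ≤ t := fun t ht => le_trans ht₀ ht
  have hfc : ContinuousOn f (Ici t₀) := fun x hx =>
    ((hf' x (hmem x hx)).continuousAt).continuousWithinAt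
  -- f is nonincreasing on [t₀, ∞)
  have hanti : AntitoneOn f (Ici t₀) := by
    apply antitoneOn_of_deriv_nonpos (convex_Ici t₀) hfc
    · intro x hx
      rw [interior_Ici] at hx
      exact ((hf' x (le_trans ht₀ (le_of_lt hx))).differentiableAt).differentiableWithinAt
    · intro x hx
      rw [interior_Ici] at hx
      rw [(hf' x (le_trans ht₀ (le_of_lt hx))).deriv]
      have := sq_nonneg ‖u' x‖
      linarith
  -- if f vanishes at some point then u equals uinf from then on
  have hzero : ∀ r ≥ t₀, f r = 0 → u r = uinf := by
    intro r hr hfr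
    have hfz : ∀ s ≥ r, f s = 0 := by
      intro s hs
      have h1 : f s ≤ f r := hanti hr (le_trans hr hs) hs
      exact le_antisymm (by rw [hfr] at h1; exact h1) (hf0 s (le_trans hr hs))
    have hu'z : ∀ s ≥ r, u' s = 0 := by
      intro s hs
      have h1 : HasDerivWithinAt f (-‖u' s‖ ^ 2) (Ici s) s :=
        ((hf' s (le_trans (hmem r hr) hs))).hasDerivWithinAt
      have h2 : HasDerivWithinAt f 0 (Ici s) s := by
        apply (hasDerivWithinAt_const s (Ici s) (0 : ℝ)).congr
        · intro x hx
          exact hfz x (le_trans hs hx)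
        · exact hfz s hs
      have h3 := (uniqueDiffOn_Ici s s self_mem_Ici).eq_deriv _ h1 h2
      have hn : ‖u' s‖ = 0 := by nlinarith [norm_nonneg (u' s)]
      exact norm_eq_zero.1 hn
    have hconst : ∀ b ≥ r, u b = u r := by
      intro b hb
      have key := norm_image_sub_le_of_norm_deriv_right_le_segment
        (f := u) (f' := u') (a := r) (b := b) (C := 0)
        (fun x hx => ((hu x (le_trans (hmem r hr) hx.1)).continuousAt).continuousWithinAt)
        (fun x hx => ((hu x (le_trans (hmem r hr) hx.1)).hasDerivWithinAt))
        (fun x hx => by rw [hu'z x hx.1]; simp)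
      have := key b ⟨hb, le_refl b⟩
      have h0 : ‖u b - u r‖ ≤ 0 := by simpa using this
      have := norm_le_zero_iff.1 h0
      exact sub_eq_zero.1 this
    have heq : (fun _ : ℝ => u r) =ᶠ[atTop] u := by
      filter_upwards [eventually_ge_atTop r] with b hb
      exact (hconst b hb).symm
    have h2 : Tendsto u atTop (nhds (u r)) := Tendsto.congr' heq tendsto_const_nhds
    exact (tendsto_nhds_unique h2 hlim)
  -- key estimate A : if f > 0 on [a, b) then ‖u b - u a‖ ≤ f a ^ θ / (θ K)
  have hA : ∀ a b : ℝ, t₀ ≤ a → a ≤ b → (∀ x ∈ Ico a b, 0 < f x) →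
      ‖u b - u a‖ ≤ f a ^ θ / (θ * K) := by
    intro a b ha hab hpos
    set B : ℝ → ℝ := fun x => (f a ^ θ - f x ^ θ) / (θ * K) with hBdef
    have hsub : Icc a b ⊆ Ici t₀ := fun x hx => le_trans ha hx.1
    have hFc : ContinuousOn (fun x => u x - u a) (Icc a b) := fun x hx =>
      (((hu x (hmem x (hsub hx))).continuousAt).continuousWithinAt).sub continuousWithinAt_const
    have hF' : ∀ x ∈ Ico a b, HasDerivWithinAt (fun y => u y - u a) (u' x) (Ici x) x := by
      intro x hx
      exact ((hu x (hmem x (hsub ⟨hx.1, hx.2.le⟩))).sub_const (u a)).hasDerivWithinAt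
    have hBc : ContinuousOn B (Icc a b) := by
      apply ContinuousOn.div_const
      apply ContinuousOn.sub continuousOn_const
      exact (hfc.mono hsub).rpow_const fun x hx => Or.inr hθ0.le
    have hB' : ∀ x ∈ Ico a b,
        HasDerivWithinAt B (‖u' x‖ ^ 2 * θ * f x ^ (θ - 1) / (θ * K)) (Ici x) x := by
      intro x hx
      have hx0 : (0 : ℝ) ≤ x := hmem x (le_trans ha hx.1)
      have hfx : 0 < f x := hpos x hx
      have h1 : HasDerivAt (fun y => f y ^ θ) (-‖u' x‖ ^ 2 * θ * f x ^ (θ - 1)) x :=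
        (hf' x hx0).rpow_const (Or.inl hfx.ne')
      have h2 : HasDerivAt B (‖u' x‖ ^ 2 * θ * f x ^ (θ - 1) / (θ * K)) x := by
        have h3 := ((hasDerivAt_const x (f a ^ θ)).sub h1).div_const (θ * K)
        refine h3.congr_deriv ?_
        ring
      exact h2.hasDerivWithinAt
    have bound : ∀ x ∈ Ico a b, ‖u' x‖ ≤ ‖u' x‖ ^ 2 * θ * f x ^ (θ - 1) / (θ * K) := by
      intro x hx
      have hfx : 0 < f x := hpos x hx
      have hls := hLSf x (le_trans ha hx.1)
      have hfp : (0 : ℝ) ≤ f x ^ (θ - 1) := Real.rpow_nonneg hfx.le _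
      have h1 : f x ^ (1 - θ) * f x ^ (θ - 1) = 1 := by
        rw [← Real.rpow_add hfx]
        norm_num
      have h2 : K ≤ ‖u' x‖ * f x ^ (θ - 1) := by
        calc K = K * (f x ^ (1 - θ) * f x ^ (θ - 1)) := by rw [h1]; ring
          _ = (K * f x ^ (1 - θ)) * f x ^ (θ - 1) := by ring
          _ ≤ ‖u' x‖ * f x ^ (θ - 1) := mul_le_mul_of_nonneg_right hls hfp
      rw [le_div_iff₀ hθK]
      calc ‖u' x‖ * (θ * K) = θ * (K * ‖u' x‖) := by ring
        _ ≤ θ * (‖u' x‖ * f x ^ (θ - 1) * ‖u' x‖) := by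
            apply mul_le_mul_of_nonneg_left _ hθ0.le
            exact mul_le_mul_of_nonneg_right h2 (norm_nonneg _)
        _ = ‖u' x‖ ^ 2 * θ * f x ^ (θ - 1) := by ring
    have ha0 : ‖u a - u a‖ ≤ B a := by simp [hBdef]
    have key := image_norm_le_of_norm_deriv_right_le_deriv_boundary'
      hFc hF' ha0 hBc hB' bound ⟨hab, le_refl b⟩
    have hfb : 0 ≤ f b ^ θ := Real.rpow_nonneg (hf0 b (le_trans ha hab)) θ
    calc ‖u b - u a‖ ≤ B b := key
      _ ≤ f a ^ θ / (θ * K) := by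
          apply (div_le_div_iff_of_pos_right hθK).2
          linarith
  -- key estimate C : pointwise distance to equilibrium
  have hC : ∀ t ≥ t₀, ‖u t - uinf‖ ≤ f t ^ θ / (θ * K) := by
    intro t ht
    by_cases hex : ({s : ℝ | t ≤ s ∧ f s = 0}).Nonempty
    · have hSeq : {s : ℝ | t ≤ s ∧ f s = 0} = Ici t ∩ f ⁻¹' {0} := by
        ext x; simp [Set.mem_setOf_eq, and_comm]
      have hclosed : IsClosed {s : ℝ | t ≤ s ∧ f s = 0} := by
        rw [hSeq]
        exact ContinuousOn.preimage_isClosed_of_isClosed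
          (hfc.mono (Ici_subset_Ici.2 ht)) isClosed_Ici isClosed_singleton
      have hbdd : BddBelow {s : ℝ | t ≤ s ∧ f s = 0} := ⟨t, fun s hs => hs.1⟩
      have hTS := hclosed.csInf_mem hex hbdd
      set T := sInf {s : ℝ | t ≤ s ∧ f s = 0} with hTdef
      obtain ⟨hT, hfT⟩ := hTS
      have huT : u T = uinf := hzero T (le_trans ht hT) hfT
      have hpos : ∀ x ∈ Ico t T, 0 < f x := by
        intro x hx
        rcases (hf0 x (le_trans ht hx.1)).lt_or_eq with h | h
        · exact h
        · exfalso
          have : T ≤ x := csInf_le hbdd ⟨hx.1, h.symm⟩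
          exact absurd hx.2 (not_lt.2 this)
      have := hA t T ht hT hpos
      rw [huT] at this
      rwa [norm_sub_rev]
    · rw [Set.not_nonempty_iff_eq_empty] at hex
      have hpos : ∀ s ≥ t, 0 < f s := by
        intro s hs
        rcases (hf0 s (le_trans ht hs)).lt_or_eq with h | h
        · exact h
        · exfalso
          have : s ∈ ({s : ℝ | t ≤ s ∧ f s = 0} : Set ℝ) := ⟨hs, h.symm⟩
          rw [hex] at this
          exact this
      have hb : ∀ b ≥ t, ‖u b - u t‖ ≤ f t ^ θ / (θ * K) := fun b hbt =>
        hA t b ht hbt fun x hx => hpos x hx.1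
      have htd : Tendsto (fun b => ‖u b - u t‖) atTop (nhds ‖uinf - u t‖) :=
        ((hlim.sub_const (u t)).norm)
      have := le_of_tendsto htd ((eventually_ge_atTop t).mono hb)
      rwa [norm_sub_rev]
  -- decay of f
  set c : ℝ := (1 - 2 * θ) * K ^ 2 with hcdef
  have hc : 0 < c := mul_pos h12 (pow_pos hK 2)
  have hD : ∀ t ≥ t₀, (∀ x ∈ Icc t₀ t, 0 < f x) →
      f t₀ ^ (2 * θ - 1) + c * (t - t₀) ≤ f t ^ (2 * θ - 1) := by
    intro t ht hpos
    set ψ : ℝ → ℝ := fun x => f x ^ (2 * θ - 1) - c * x with hψdef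
    have hψderiv : ∀ x ∈ Ioo t₀ t, HasDerivAt ψ
        (-‖u' x‖ ^ 2 * (2 * θ - 1) * f x ^ (2 * θ - 1 - 1) - c * 1) x := by
      intro x hx
      have hx0 : (0 : ℝ) ≤ x := hmem x hx.1.le
      have hfx : 0 < f x := hpos x ⟨hx.1.le, hx.2.le⟩
      exact ((hf' x hx0).rpow_const (Or.inl hfx.ne')).sub ((hasDerivAt_id x).const_mul c)
    have hmono : MonotoneOn ψ (Icc t₀ t) := by
      apply monotoneOn_of_deriv_nonneg (convex_Icc t₀ t)
      · apply ContinuousOn.sub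
        · exact (hfc.mono Icc_subset_Ici_self).rpow_const fun x hx => Or.inl (hpos x hx).ne'
        · exact (continuous_const.mul continuous_id).continuousOn
      · intro x hx
        rw [interior_Icc] at hx
        exact (hψderiv x hx).differentiableAt.differentiableWithinAt
      · intro x hx
        rw [interior_Icc] at hx
        rw [(hψderiv x hx).deriv]
        have hfx : 0 < f x := hpos x ⟨hx.1.le, hx.2.le⟩
        have hls := hLSf x hx.1.le
        have hKf : (0 : ℝ) ≤ K * f x ^ (1 - θ) :=
          mul_nonneg hK.le (Real.rpow_nonneg hfx.le _)
        have hsq0 := mul_self_le_mul_self hKf hls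
        have e1 : f x ^ (1 - θ) * f x ^ (1 - θ) = f x ^ (2 - 2 * θ) := by
          rw [← Real.rpow_add hfx]; ring_nf
        have hsq : K ^ 2 * f x ^ (2 - 2 * θ) ≤ ‖u' x‖ ^ 2 := by
          calc K ^ 2 * f x ^ (2 - 2 * θ) = K * f x ^ (1 - θ) * (K * f x ^ (1 - θ)) := by
                rw [← e1]; ring
            _ ≤ ‖u' x‖ * ‖u' x‖ := hsq0
            _ = ‖u' x‖ ^ 2 := (sq ‖u' x‖).symm
        have hfp : (0 : ℝ) ≤ f x ^ (2 * θ - 1 - 1) := Real.rpow_nonneg hfx.le _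
        have e2 : f x ^ (2 - 2 * θ) * f x ^ (2 * θ - 1 - 1) = 1 := by
          have hz : (2 - 2 * θ) + (2 * θ - 1 - 1) = 0 := by ring
          rw [← Real.rpow_add hfx, hz, Real.rpow_zero]
        have h3 : K ^ 2 ≤ ‖u' x‖ ^ 2 * f x ^ (2 * θ - 1 - 1) := by
          calc K ^ 2 = K ^ 2 * (f x ^ (2 - 2 * θ) * f x ^ (2 * θ - 1 - 1)) := by
                rw [e2]; ring
            _ = (K ^ 2 * f x ^ (2 - 2 * θ)) * f x ^ (2 * θ - 1 - 1) := by ring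
            _ ≤ ‖u' x‖ ^ 2 * f x ^ (2 * θ - 1 - 1) :=
                mul_le_mul_of_nonneg_right hsq hfp
        have hcval : c = (1 - 2 * θ) * K ^ 2 := hcdef
        nlinarith [h3, h12]
    have := hmono (left_mem_Icc.2 ht) (right_mem_Icc.2 ht) ht
    have hψ1 : ψ t₀ = f t₀ ^ (2 * θ - 1) - c * t₀ := rfl
    have hψ2 : ψ t = f t ^ (2 * θ - 1) - c * t := rfl
    rw [hψ1, hψ2] at this
    linarith
  -- assemble
  by_cases hft₀ : f t₀ = 0
  · refine ⟨1, one_pos, fun t ht => ?_⟩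
    have hftz : f t = 0 := by
      have h1 : f t ≤ f t₀ := hanti (self_mem_Ici) ht ht
      exact le_antisymm (by rw [hft₀] at h1; exact h1) (hf0 t ht)
    have h1t : (0 : ℝ) < 1 + t := by linarith [hmem t ht]
    rw [hzero t ht hftz]
    simp only [sub_self, norm_zero]
    positivity
  · have hft₀' : 0 < f t₀ := (hf0 t₀ le_rfl).lt_of_ne (Ne.symm hft₀)
    set α := θ / (1 - 2 * θ) with hα
    have hα0 : 0 < α := div_pos hθ0 h12
    have h1t₀ : (0 : ℝ) < 1 + t₀ := by linarith
    set c' : ℝ := min c (f t₀ ^ (2 * θ - 1) / (1 + t₀)) with hc'def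
    have hc'0 : 0 < c' := lt_min hc (div_pos (Real.rpow_pos_of_pos hft₀' _) h1t₀)
    refine ⟨c' ^ (-α) / (θ * K), by positivity, fun t ht => ?_⟩
    have h1t : (0 : ℝ) < 1 + t := by linarith [hmem t ht]
    by_cases hft : f t = 0
    · rw [hzero t ht hft]
      simp only [sub_self, norm_zero]
      positivity
    · have hftpos : 0 < f t := (hf0 t ht).lt_of_ne (Ne.symm hft)
      have hpos : ∀ x ∈ Icc t₀ t, 0 < f x := fun x hx =>
        lt_of_lt_of_le hftpos (hanti hx.1 ht hx.2)
      have hDt := hD t ht hpos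
      have h2 : c' * (1 + t) ≤ f t ^ (2 * θ - 1) := by
        have e1 : c' ≤ c := min_le_left _ _
        have e2 : c' * (1 + t₀) ≤ f t₀ ^ (2 * θ - 1) := by
          have h5 := min_le_right c (f t₀ ^ (2 * θ - 1) / (1 + t₀))
          calc c' * (1 + t₀) ≤ (f t₀ ^ (2 * θ - 1) / (1 + t₀)) * (1 + t₀) :=
                mul_le_mul_of_nonneg_right h5 h1t₀.le
            _ = f t₀ ^ (2 * θ - 1) := div_mul_cancel₀ _ h1t₀.ne'
        nlinarith [hDt]
      have hcb : 0 < c' * (1 + t) := mul_pos hc'0 h1t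
      have eexp : (2 * θ - 1) * (-α) = θ := by
        rw [hα]
        field_simp
        ring
      have e3 : (f t ^ (2 * θ - 1)) ^ (-α) = f t ^ θ := by
        rw [← Real.rpow_mul hftpos.le, eexp]
      have h3 : f t ^ θ ≤ (c' * (1 + t)) ^ (-α) := by
        rw [← e3]
        exact Real.rpow_le_rpow_of_nonpos hcb h2 (neg_nonpos.2 hα0.le)
      have h5 : (c' * (1 + t)) ^ (-α) = c' ^ (-α) * (1 + t) ^ (-α) :=
        Real.mul_rpow hc'0.le h1t.le
      calc ‖u t - uinf‖ ≤ f t ^ θ / (θ * K) := hC t ht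
        _ ≤ (c' ^ (-α) * (1 + t) ^ (-α)) / (θ * K) := by
            rw [← h5]; exact (div_le_div_iff_of_pos_right hθK).2 h3
        _ = c' ^ (-α) / (θ * K) * (1 + t) ^ (-α) := by ring
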